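/- arXiv:math/0411570 — 2 statements merged into one kernel-verified Lean document; each statement's English description precedes it below -/
import Mathlib

section
/- Let M be a square free ℕ^n-graded module over S = k[x_1,...,x_n] and let R ⊆ [n] be maximal among subsets with M_R ≠ 0, with corresponding prime P = (x_i : i ∉ R). Then the natural map S/P ⊗_k M_R → M (sending 1 ⊗ m to m, with M_R in multidegree the characteristic vector of R) becomes an isomorphism after localization at P. -/
open MvPolynomial TensorProduct

noncomputable section

set_option synthInstance.maxHeartbeats 1000000
set_option maxHeartbeats 1000000

/-- Characteristic vector of a subset of `[n]`. -/
def chi (n : ℕ) (R : Finset (Fin n)) : Fin n →₀ ℕ := ∑ x ∈ R, Finsupp.single x 1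

lemma chi_apply (n : ℕ) (R : Finset (Fin n)) (i : Fin n) :
    chi n R i = if i ∈ R then 1 else 0 := by
  classical
  simp [chi, Finsupp.finset_sum_apply, Finsupp.single_apply]

lemma chi_support (n : ℕ) (R : Finset (Fin n)) : (chi n R).support = R := by
  ext i
  simp [Finsupp.mem_support_iff, chi_apply]

lemma support_add_nat {n : ℕ} (a b : Fin n →₀ ℕ) :
    (a + b).support = a.support ∪ b.support := by
  ext i
  simp [Finsupp.mem_support_iff]
  omega

lemma exists_decomp {n : ℕ} (b : Fin n →₀ ℕ) :
    ∃ c : Fin n →₀ ℕ, c.support ⊆ b.support ∧ chi n b.support + c = b := by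
  refine ⟨b - chi n b.support, ?_, ?_⟩
  · intro i hi
    simp only [Finsupp.mem_support_iff, Finsupp.tsub_apply] at hi ⊢
    omega
  · ext i
    simp only [Finsupp.add_apply, Finsupp.tsub_apply, chi_apply, Finsupp.mem_support_iff]
    by_cases h : b i = 0 <;> simp [h] <;> omega

section Aux

variable {n : ℕ} {k : Type} [Field k]

lemma monomial_not_mem_P (R : Finset (Fin n)) (P : Ideal (MvPolynomial (Fin n) k))
    (hP : P = Ideal.span ((fun i => (X i : MvPolynomial (Fin n) k)) '' {i | i ∉ R}))
    (t : Fin n →₀ ℕ) (ht : t.support ⊆ R) : monomial t (1 : k) ∉ P := by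
  intro hmem
  set f : Fin n → k := fun i => if i ∈ R then 1 else 0 with hf
  have hker : P ≤ RingHom.ker (aeval f : MvPolynomial (Fin n) k →ₐ[k] k).toRingHom := by
    rw [hP, Ideal.span_le]
    rintro _ ⟨i, hi, rfl⟩
    simp only [SetLike.mem_coe, RingHom.mem_ker, AlgHom.toRingHom_eq_coe, RingHom.coe_coe,
      aeval_X]
    simp only [Set.mem_setOf_eq] at hi
    simp [hf, hi]
  have h0 : aeval f (monomial t (1 : k)) = 0 := hker hmem
  rw [aeval_monomial] at h0
  have h1 : (t.prod fun i e => f i ^ e) = 1 := by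
    apply Finset.prod_eq_one
    intro i hi
    have : i ∈ R := ht hi
    simp [hf, this]
  rw [h1] at h0
  simp at h0

lemma monomial_mem_P (R : Finset (Fin n)) (P : Ideal (MvPolynomial (Fin n) k))
    (hP : P = Ideal.span ((fun i => (X i : MvPolynomial (Fin n) k)) '' {i | i ∉ R}))
    (t : Fin n →₀ ℕ) (ht : ¬ t.support ⊆ R) : monomial t (1 : k) ∈ P := by
  obtain ⟨i, hit, hiR⟩ : ∃ i, i ∈ t.support ∧ i ∉ R := by
    simpa [Finset.subset_iff] using ht
  have hXi : (X i : MvPolynomial (Fin n) k) ∈ P := by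
    rw [hP]
    exact Ideal.subset_span ⟨i, hiR, rfl⟩
  have hdec : Finsupp.single i 1 + (t - Finsupp.single i 1) = t := by
    ext j
    simp only [Finsupp.add_apply, Finsupp.tsub_apply, Finsupp.single_apply]
    have := Finsupp.mem_support_iff.mp hit
    by_cases h : i = j
    · subst h; simp; omega
    · simp [h]
  have hmono : (X i : MvPolynomial (Fin n) k) * monomial (t - Finsupp.single i 1) 1
      = monomial t (1 : k) := by
    rw [X, monomial_mul, one_mul, hdec]
  rw [← hmono]
  exact Ideal.mul_mem_right _ _ hXi

lemma tensor_repr (P : Ideal (MvPolynomial (Fin n) k))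
    (V : Type*) [AddCommGroup V] [Module k V]
    (x : (MvPolynomial (Fin n) k ⧸ P) ⊗[k] V) :
    ∃ m : (Fin n →₀ ℕ) →₀ V,
      x = m.sum (fun a v => (Ideal.Quotient.mk P (monomial a (1:k))) ⊗ₜ[k] v) := by
  classical
  induction x with
  | zero => exact ⟨0, by simp⟩
  | tmul p v =>
    obtain ⟨f, rfl⟩ := Ideal.Quotient.mk_surjective p
    refine ⟨Finsupp.mapRange (fun c => c • v) (zero_smul k v) (AddMonoidAlgebra.coeff f), ?_⟩
    rw [Finsupp.sum_mapRange_index (by intro a; simp)]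
    have hterm : ∀ a : Fin n →₀ ℕ, ∀ c : k,
        (Ideal.Quotient.mk P (monomial a (1:k))) ⊗ₜ[k] (c • v)
          = (Ideal.Quotient.mk P (monomial a c)) ⊗ₜ[k] v := by
      intro a c
      rw [tmul_smul, smul_tmul']
      congr 1
      rw [← Ideal.Quotient.mkₐ_eq_mk k P, ← map_smul, smul_monomial, smul_eq_mul, mul_one]
    symm
    calc ((AddMonoidAlgebra.coeff f).sum fun a c => (Ideal.Quotient.mk P (monomial a (1:k))) ⊗ₜ[k] (c • v))
        = (AddMonoidAlgebra.coeff f).sum fun a c => (Ideal.Quotient.mk P (monomial a c)) ⊗ₜ[k] v := by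
          apply Finsupp.sum_congr; intro a _; exact hterm a _
      _ = (Ideal.Quotient.mk P ((AddMonoidAlgebra.coeff f).sum fun a c => monomial a c)) ⊗ₜ[k] v := by
          rw [Finsupp.sum, Finsupp.sum, map_sum, sum_tmul]
      _ = (Ideal.Quotient.mk P f) ⊗ₜ[k] v := by
          congr 1
          conv_rhs => rw [f.as_sum]
          rfl
  | add x y ihx ihy =>
    obtain ⟨mx, hx⟩ := ihx
    obtain ⟨my, hy⟩ := ihy
    refine ⟨mx + my, ?_⟩
    rw [hx, hy, Finsupp.sum_add_index (by intro a _; simp) (by intro a _ v₁ v₂; rw [tmul_add])]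

variable {M : Type} [AddCommGroup M] [Module (MvPolynomial (Fin n) k) M]
  [Module k M] [IsScalarTower k (MvPolynomial (Fin n) k) M]
  (g : (Fin n →₀ ℕ) → Submodule k M)

lemma mem_smul_monomial
    (hmul : ∀ (b : Fin n →₀ ℕ) (i : Fin n), ∀ m ∈ g b,
      (X i : MvPolynomial (Fin n) k) • m ∈ g (b + Finsupp.single i 1))
    (c : Fin n →₀ ℕ) :
    ∀ b : Fin n →₀ ℕ, ∀ m ∈ g b, (monomial c (1:k)) • m ∈ g (b + c) := by
  induction c using Finsupp.induction with
  | zero =>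
    intro b m hm
    simpa [monomial_zero'] using hm
  | single_add i e c hic he ih =>
    clear he hic
    induction e with
    | zero => simpa using ih
    | succ e ihe =>
      intro b m hm
      have h1 : Finsupp.single i (e + 1) + c
          = Finsupp.single i 1 + (Finsupp.single i e + c) := by
        rw [← add_assoc, ← Finsupp.single_add]; ring_nf
      rw [h1]
      have step : (monomial (Finsupp.single i 1 + (Finsupp.single i e + c)) (1:k)) • m
          = (X i : MvPolynomial (Fin n) k)
              • ((monomial (Finsupp.single i e + c) (1:k)) • m) := by
        rw [← mul_smul, X, monomial_mul, one_mul]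
      rw [step]
      have := hmul _ i _ (ihe b m hm)
      convert this using 2
      abel

lemma key_inj_surj
    (hmul : ∀ (b : Fin n →₀ ℕ) (i : Fin n), ∀ m ∈ g b,
      (X i : MvPolynomial (Fin n) k) • m ∈ g (b + Finsupp.single i 1))
    (hsf : ∀ b : Fin n →₀ ℕ, ∀ i ∈ b.support,
      (∀ m ∈ g b, (X i : MvPolynomial (Fin n) k) • m = 0 → m = 0) ∧
      (∀ m' ∈ g (b + Finsupp.single i 1), ∃ m ∈ g b,
        (X i : MvPolynomial (Fin n) k) • m = m'))
    (c : Fin n →₀ ℕ) :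
    ∀ b : Fin n →₀ ℕ, c.support ⊆ b.support →
      ((∀ m ∈ g b, (monomial c (1:k)) • m = 0 → m = 0) ∧
       (∀ m' ∈ g (b + c), ∃ m ∈ g b, (monomial c (1:k)) • m = m')) := by
  induction c using Finsupp.induction with
  | zero =>
    intro b _
    constructor
    · intro m hm h0
      simpa [monomial_zero'] using h0
    · intro m' hm'
      refine ⟨m', by simpa using hm', by simp [monomial_zero']⟩
  | single_add i e c hic he ih =>
    clear he hic
    induction e with
    | zero => simpa using ih
    | succ e ihe =>
      intro b hsupp
      have hib : i ∈ b.support := by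
        apply hsupp
        simp [Finsupp.mem_support_iff]
      have hsupp' : (Finsupp.single i e + c).support ⊆ b.support := by
        intro j hj
        apply hsupp
        simp only [Finsupp.mem_support_iff, Finsupp.add_apply, Finsupp.single_apply] at hj ⊢
        by_cases h : i = j <;> simp [h] at hj ⊢ <;> omega
      have h1 : Finsupp.single i (e + 1) + c
          = Finsupp.single i 1 + (Finsupp.single i e + c) := by
        rw [← add_assoc, ← Finsupp.single_add]; ring_nf
      have hmono : ∀ m : M, (monomial (Finsupp.single i (e+1) + c) (1:k)) • m
          = (X i : MvPolynomial (Fin n) k)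
              • ((monomial (Finsupp.single i e + c) (1:k)) • m) := by
        intro m
        rw [h1, ← mul_smul, X, monomial_mul, one_mul]
      have hib2 : i ∈ (b + (Finsupp.single i e + c)).support := by
        simp only [Finsupp.mem_support_iff, Finsupp.add_apply] at hib ⊢
        omega
      obtain ⟨ihinj, ihsurj⟩ := ihe b hsupp'
      constructor
      · intro m hm h0
        rw [hmono] at h0
        have hmem : (monomial (Finsupp.single i e + c) (1:k)) • m
            ∈ g (b + (Finsupp.single i e + c)) :=
          mem_smul_monomial g hmul _ b m hm
        have := (hsf _ i hib2).1 _ hmem h0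
        exact ihinj m hm this
      · intro m' hm'
        have hm'' : m' ∈ g ((b + (Finsupp.single i e + c)) + Finsupp.single i 1) := by
          convert hm' using 2
          rw [h1]; abel
        obtain ⟨m₁, hm₁, hXm₁⟩ := (hsf _ i hib2).2 _ hm''
        obtain ⟨m₀, hm₀, hcm₀⟩ := ihsurj _ hm₁
        exact ⟨m₀, hm₀, by rw [hmono, hcm₀, hXm₁]⟩

lemma vanish
    (hmul : ∀ (b : Fin n →₀ ℕ) (i : Fin n), ∀ m ∈ g b,
      (X i : MvPolynomial (Fin n) k) • m ∈ g (b + Finsupp.single i 1))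
    (hsf : ∀ b : Fin n →₀ ℕ, ∀ i ∈ b.support,
      (∀ m ∈ g b, (X i : MvPolynomial (Fin n) k) • m = 0 → m = 0) ∧
      (∀ m' ∈ g (b + Finsupp.single i 1), ∃ m ∈ g b,
        (X i : MvPolynomial (Fin n) k) • m = m'))
    {R : Finset (Fin n)}
    (hRmax : ∀ R' : Finset (Fin n), g (chi n R') ≠ ⊥ → R ⊆ R' → R' = R)
    (b : Fin n →₀ ℕ) (hsub : R ⊆ b.support) (hne : b.support ≠ R) :
    g b = ⊥ := by
  have htop : g (chi n b.support) = ⊥ := by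
    by_contra h
    exact hne (hRmax _ h hsub)
  obtain ⟨c, hc, hdec⟩ := exists_decomp b
  rw [Submodule.eq_bot_iff]
  intro m' hm'
  have hc' : c.support ⊆ (chi n b.support).support := by rw [chi_support]; exact hc
  have hm'' : m' ∈ g (chi n b.support + c) := by rw [hdec]; exact hm'
  obtain ⟨m₀, hm₀, hcm₀⟩ := (key_inj_surj g hmul hsf c _ hc').2 m' hm''
  rw [htop, Submodule.mem_bot] at hm₀
  rw [← hcm₀, hm₀, smul_zero]

lemma indep (hdecomp : DirectSum.IsInternal g)
    {ι : Type*} (s : Finset ι) (d : ι → (Fin n →₀ ℕ)) (hd : Set.InjOn d s)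
    (v : ι → M) (hv : ∀ a ∈ s, v a ∈ g (d a)) (hsum : ∑ a ∈ s, v a = 0) :
    ∀ a ∈ s, v a = 0 := by
  classical
  set w : DirectSum _ (fun b => ↥(g b)) :=
    ∑ a ∈ s.attach, DirectSum.of (fun b => ↥(g b)) (d a) ⟨v a, hv a a.2⟩ with hw
  have hcoe : DirectSum.coeAddMonoidHom g w = 0 := by
    rw [hw, map_sum]
    simp only [DirectSum.coeAddMonoidHom_of]
    rw [← hsum, ← Finset.sum_attach s v]
  have hw0 : w = 0 := hdecomp.injective (by rw [hcoe, map_zero])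
  intro a ha
  have hz : w (d a) = 0 := by rw [hw0]; rfl
  rw [hw, DFinsupp.finset_sum_apply] at hz
  rw [Finset.sum_eq_single (⟨a, ha⟩ : {x // x ∈ s})] at hz
  · rw [DirectSum.of_eq_same] at hz
    exact congrArg Subtype.val hz
  · intro b _ hb
    apply DirectSum.of_eq_of_ne
    intro hdb
    exact hb (Subtype.ext (hd b.2 ha hdb.symm))
  · intro h
    exact absurd (Finset.mem_attach s _) h

end Aux

/-- Let `M` be a square free `ℕ^n`-graded module over `S = k[x_1,…,x_n]` (the grading is
given by `k`-submodules `g b` forming an internal direct sum, compatible with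
multiplication by the variables, with `x_i : M_b → M_{b+u_i}` bijective whenever `i` lies
in the support of `b`).  Let `R` be maximal among the subsets of `[n]` with `M_R ≠ 0` and
`P = (x_i : i ∉ R)` the corresponding prime.  Then the natural `S`-linear map
`S/P ⊗_k M_R → M`, `1 ⊗ m ↦ m`, becomes an isomorphism after localization at `P`:
its kernel and cokernel are annihilated by elements outside `P`. -/
theorem stmt_11 (n : ℕ) (k : Type) [Field k]
    (M : Type) [AddCommGroup M] [Module (MvPolynomial (Fin n) k) M]
    [Module k M] [IsScalarTower k (MvPolynomial (Fin n) k) M]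
    (g : (Fin n →₀ ℕ) → Submodule k M)
    (hdecomp : DirectSum.IsInternal g)
    (hmul : ∀ (b : Fin n →₀ ℕ) (i : Fin n), ∀ m ∈ g b,
      (X i : MvPolynomial (Fin n) k) • m ∈ g (b + Finsupp.single i 1))
    (hsf : ∀ b : Fin n →₀ ℕ, ∀ i ∈ b.support,
      (∀ m ∈ g b, (X i : MvPolynomial (Fin n) k) • m = 0 → m = 0) ∧
      (∀ m' ∈ g (b + Finsupp.single i 1), ∃ m ∈ g b,
        (X i : MvPolynomial (Fin n) k) • m = m'))
    (R : Finset (Fin n))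
    (hR : g (chi n R) ≠ ⊥)
    (hRmax : ∀ R' : Finset (Fin n), g (chi n R') ≠ ⊥ → R ⊆ R' → R' = R)
    (P : Ideal (MvPolynomial (Fin n) k))
    (hP : P = Ideal.span ((fun i => (X i : MvPolynomial (Fin n) k)) '' {i | i ∉ R}))
    (θ : ((MvPolynomial (Fin n) k ⧸ P) ⊗[k] ↥(g (chi n R)))
      →ₗ[MvPolynomial (Fin n) k] M)
    (hθ : ∀ m : ↥(g (chi n R)),
      θ ((1 : MvPolynomial (Fin n) k ⧸ P) ⊗ₜ[k] m) = (m : M)) :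
    (∀ x, θ x = 0 → ∃ s ∉ P, s • x = 0) ∧
    (∀ m : M, ∃ s ∉ P, ∃ y, s • m = θ y) := by
  classical
  have hchiR : (chi n R).support = R := chi_support n R
  have hθmon : ∀ (a : Fin n →₀ ℕ) (v : ↥(g (chi n R))),
      θ ((Ideal.Quotient.mk P (monomial a (1:k))) ⊗ₜ[k] v)
        = (monomial a (1:k) : MvPolynomial (Fin n) k) • (v : M) := by
    intro a v
    have h1 : (Ideal.Quotient.mk P (monomial a (1:k))) ⊗ₜ[k] v
        = (monomial a (1:k) : MvPolynomial (Fin n) k)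
            • ((1 : MvPolynomial (Fin n) k ⧸ P) ⊗ₜ[k] v) := by
      rw [smul_tmul']
      congr 1
      have h2 : (1 : MvPolynomial (Fin n) k ⧸ P) = Submodule.Quotient.mk 1 := rfl
      rw [h2, ← Submodule.Quotient.mk_smul, smul_eq_mul, mul_one, Ideal.Quotient.mk_eq_mk]
    rw [h1, map_smul, hθ]
  constructor
  · -- injectivity
    intro x hx
    refine ⟨1, ?_, ?_⟩
    · have := monomial_not_mem_P R P hP 0 (by simp)
      simpa using this
    rw [one_smul]
    obtain ⟨m, rfl⟩ := tensor_repr P _ x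
    rw [map_finsuppSum] at hx
    rw [Finsupp.sum] at hx
    simp only [hθmon] at hx
    have hzero := indep g hdecomp m.support (fun a => chi n R + a)
      (fun a _ b _ hab => by exact add_left_cancel hab)
      (fun a => (monomial a (1:k) : MvPolynomial (Fin n) k) • ((m a : M)))
      (fun a _ => mem_smul_monomial g hmul a (chi n R) _ (m a).2)
      hx
    rw [Finsupp.sum]
    apply Finset.sum_eq_zero
    intro a ha
    by_cases hsub : a.support ⊆ R
    · have hinj := (key_inj_surj g hmul hsf a (chi n R) (by rw [hchiR]; exact hsub)).1
      have h0 : (m a : M) = 0 := hinj _ (m a).2 (hzero a ha)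
      have h0' : m a = 0 := Subtype.ext h0
      rw [h0', tmul_zero]
    · have h0 : Ideal.Quotient.mk P (monomial a (1:k)) = 0 := by
        rw [Ideal.Quotient.eq_zero_iff_mem]
        exact monomial_mem_P R P hP a hsub
      rw [h0, zero_tmul]
  · -- surjectivity
    intro m0
    suffices h : ∃ t : Fin n →₀ ℕ, t.support ⊆ R ∧
        ∃ y, (monomial t (1:k) : MvPolynomial (Fin n) k) • m0 = θ y by
      obtain ⟨t, ht, y, hy⟩ := h
      exact ⟨monomial t 1, monomial_not_mem_P R P hP t ht, y, hy⟩
    -- homogeneous case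
    have homog : ∀ (b : Fin n →₀ ℕ), ∀ m ∈ g b, ∃ t : Fin n →₀ ℕ, t.support ⊆ R ∧
        ∃ y, (monomial t (1:k) : MvPolynomial (Fin n) k) • m = θ y := by
      intro b m hm
      set t := chi n (R \ b.support) with htdef
      have hts : t.support = R \ b.support := chi_support n _
      have htR : t.support ⊆ R := by rw [hts]; exact Finset.sdiff_subset
      have hmem : (monomial t (1:k)) • m ∈ g (b + t) :=
        mem_smul_monomial g hmul t b m hm
      have hsupp : (b + t).support = b.support ∪ R := by
        rw [support_add_nat, hts]
        ext i; simp only [Finset.mem_union, Finset.mem_sdiff]; tauto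
      by_cases hbR : b.support ⊆ R
      · have hsuppR : (b + t).support = R := by
          rw [hsupp]; exact Finset.union_eq_right.mpr hbR
        obtain ⟨c, hc, hdec⟩ := exists_decomp (b + t)
        rw [hsuppR] at hc hdec
        have hc' : c.support ⊆ (chi n R).support := by rw [hchiR]; exact hc
        obtain ⟨m₀, hm₀, hcm₀⟩ := (key_inj_surj g hmul hsf c _ hc').2
          ((monomial t (1:k)) • m) (by rw [hdec]; exact hmem)
        refine ⟨t, htR, (Ideal.Quotient.mk P (monomial c (1:k))) ⊗ₜ[k] ⟨m₀, hm₀⟩, ?_⟩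
        rw [hθmon, ← hcm₀]
      · have hbot : g (b + t) = ⊥ := by
          apply vanish g hmul hsf hRmax
          · rw [hsupp]; exact Finset.subset_union_right
          · rw [hsupp]
            intro hcontra
            obtain ⟨j, hj, hjR⟩ := Finset.not_subset.mp hbR
            exact hjR (hcontra ▸ Finset.mem_union_left R hj)
        have h0 : (monomial t (1:k)) • m = 0 := by
          rw [Submodule.eq_bot_iff] at hbot
          exact hbot _ hmem
        exact ⟨t, htR, 0, by rw [h0, map_zero]⟩
    obtain ⟨w, hw⟩ := hdecomp.surjective m0
    rw [← hw, ← DirectSum.sum_support_of (x := w), map_sum]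
    simp only [DirectSum.coeAddMonoidHom_of]
    refine Finset.sum_induction _ (fun m => ∃ t : Fin n →₀ ℕ, t.support ⊆ R ∧
        ∃ y, (monomial t (1:k) : MvPolynomial (Fin n) k) • m = θ y) ?_ ?_ ?_
    · rintro m₁ m₂ ⟨t₁, ht₁, y₁, hy₁⟩ ⟨t₂, ht₂, y₂, hy₂⟩
      refine ⟨t₁ + t₂, ?_, (monomial t₂ (1:k) : MvPolynomial (Fin n) k) • y₁
        + (monomial t₁ (1:k) : MvPolynomial (Fin n) k) • y₂, ?_⟩
      · rw [support_add_nat]; exact Finset.union_subset ht₁ ht₂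
      · rw [smul_add, map_add, map_smul, map_smul, ← hy₁, ← hy₂,
          ← mul_smul, ← mul_smul, monomial_mul, monomial_mul, one_mul, add_comm t₂ t₁]
    · exact ⟨0, by simp, 0, by simp [monomial_zero']⟩
    · intro b _
      exact homog b _ (w b).2
end
end

section
/- Let M be a square free ℕ^n-graded module over S = k[x_1,...,x_n]. Then the minimal primes of M are exactly the ideals (x_i : i ∉ R) where R ranges over the maximal subsets of [n] with M_R ≠ 0. -/
set_option linter.unusedSectionVars false


open MvPolynomial

noncomputable section

namespace SqFree

variable {n : ℕ} {k : Type} [Field k]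

lemma chi_apply (R : Finset (Fin n)) (i : Fin n) :
    chi n R i = if i ∈ R then 1 else 0 := by
  classical
  rw [chi]
  rw [Finset.sum_apply']
  simp [Finsupp.single_apply]

lemma chi_support (R : Finset (Fin n)) : (chi n R).support = R := by
  ext i
  simp [Finsupp.mem_support_iff, chi_apply]

def PR (R : Finset (Fin n)) : Ideal (MvPolynomial (Fin n) k) :=
  Ideal.span ((fun i => (X i : MvPolynomial (Fin n) k)) '' {i | i ∉ R})

lemma X_mem_PR {R : Finset (Fin n)} {i : Fin n} (hi : i ∉ R) :
    (X i : MvPolynomial (Fin n) k) ∈ PR R :=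
  Ideal.subset_span ⟨i, hi, rfl⟩

lemma mem_PR {R : Finset (Fin n)} {f : MvPolynomial (Fin n) k} :
    f ∈ PR R ↔ ∀ c : Fin n →₀ ℕ, c.support ⊆ R → coeff c f = 0 := by
  classical
  constructor
  · intro hf
    let J : Ideal (MvPolynomial (Fin n) k) :=
      { carrier := {f | ∀ c : Fin n →₀ ℕ, c.support ⊆ R → coeff c f = 0}
        add_mem' := fun ha hb c hc => by simp [coeff_add, ha c hc, hb c hc]
        zero_mem' := fun c _ => by simp
        smul_mem' := by
          intro p f hf c hc
          rw [smul_eq_mul, coeff_mul]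
          apply Finset.sum_eq_zero
          rintro ⟨a, b⟩ hab
          rw [Finset.HasAntidiagonal.mem_antidiagonal] at hab
          have hb : b.support ⊆ R := by
            intro i hi
            have hbi := Finsupp.mem_support_iff.mp hi
            apply hc
            rw [Finsupp.mem_support_iff]
            intro h0
            have : a i + b i = 0 := by rw [← Finsupp.add_apply, hab]; exact h0
            omega
          rw [hf b hb, mul_zero] }
    have : PR R ≤ J := by
      rw [PR, Ideal.span_le]
      rintro _ ⟨i, hi, rfl⟩
      intro c hc
      rw [coeff_X']
      split_ifs with h
      · exact absurd (hc (by rw [← h]; simp)) hi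
      · rfl
    exact this hf
  · intro hcoeff
    rw [as_sum f]
    apply Ideal.sum_mem
    intro c hc
    have hcs : ¬ c.support ⊆ R := fun h => by
      rw [MvPolynomial.mem_support_iff] at hc; exact hc (hcoeff c h)
    obtain ⟨i, hic, hiR⟩ := Finset.not_subset.mp hcs
    have hci : c i ≠ 0 := Finsupp.mem_support_iff.mp hic
    have hcc : Finsupp.single i 1 + (c - Finsupp.single i 1) = c :=
      add_tsub_cancel_of_le (Finsupp.single_le_iff.mpr (Nat.one_le_iff_ne_zero.mpr hci))
    have : monomial c (coeff c f) =
        X i * monomial (c - Finsupp.single i 1) (coeff c f) := by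
      rw [X, monomial_mul, one_mul, hcc]
    rw [this]
    exact Ideal.mul_mem_right _ _ (X_mem_PR hiR)

def psi (R : Finset (Fin n)) :
    MvPolynomial (Fin n) k →ₐ[k] MvPolynomial {i // i ∈ R} k :=
  aeval (fun i => if h : i ∈ R then X (⟨i, h⟩ : {i // i ∈ R}) else 0)

lemma PR_eq_ker (R : Finset (Fin n)) :
    PR (k := k) R = RingHom.ker (psi (k := k) R) := by
  apply le_antisymm
  · rw [PR, Ideal.span_le]
    rintro _ ⟨i, hi, rfl⟩
    simp only [SetLike.mem_coe, RingHom.mem_ker, psi]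
    rw [show ((aeval fun i => if h : i ∈ R then X (⟨i, h⟩ : {i // i ∈ R}) else 0)
      (X i : MvPolynomial (Fin n) k)) = _ from aeval_X _ i]
    simp only [Set.mem_setOf_eq] at hi
    simp [hi]
  · intro f hf
    have key : (Ideal.Quotient.mkₐ k (PR R)).comp
        (((rename (Subtype.val : {i // i ∈ R} → Fin n)).restrictScalars k).comp (psi R))
        = Ideal.Quotient.mkₐ k (PR R) := by
      apply algHom_ext
      intro i
      simp only [AlgHom.comp_apply, psi, aeval_X, AlgHom.coe_restrictScalars']
      split_ifs with h
      · simp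
      · rw [map_zero, map_zero]
        exact (Ideal.Quotient.eq_zero_iff_mem.mpr (X_mem_PR h)).symm
    have h2 := DFunLike.congr_fun key f
    simp only [AlgHom.comp_apply] at h2
    rw [RingHom.mem_ker] at hf
    rw [hf] at h2
    simp only [map_zero] at h2
    exact Ideal.Quotient.eq_zero_iff_mem.mp h2.symm

instance PR_isPrime (R : Finset (Fin n)) : (PR (k := k) R).IsPrime := by
  rw [PR_eq_ker]
  exact RingHom.ker_isPrime _

variable {M : Type} [AddCommGroup M] [Module (MvPolynomial (Fin n) k) M]
    [Module k M] [IsScalarTower k (MvPolynomial (Fin n) k) M]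
    {g : (Fin n →₀ ℕ) → Submodule k M}

def deg (c : Fin n →₀ ℕ) : ℕ := ∑ j, c j

lemma deg_add (a b : Fin n →₀ ℕ) : deg (a + b) = deg a + deg b := by
  simp [deg, Finset.sum_add_distrib]

lemma deg_single (i : Fin n) : deg (Finsupp.single i 1) = 1 := by
  simp [deg, Finsupp.single_apply]

lemma sub_single_add {c : Fin n →₀ ℕ} {i : Fin n} (h : c i ≠ 0) :
    Finsupp.single i 1 + (c - Finsupp.single i 1) = c :=
  add_tsub_cancel_of_le (Finsupp.single_le_iff.mpr (Nat.one_le_iff_ne_zero.mpr h))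

lemma monomial_smul_mem
    (hmul : ∀ (b : Fin n →₀ ℕ) (i : Fin n), ∀ m ∈ g b,
      (X i : MvPolynomial (Fin n) k) • m ∈ g (b + Finsupp.single i 1)) :
    ∀ (N : ℕ) (c b : Fin n →₀ ℕ), deg c = N → ∀ m ∈ g b,
      ((monomial c (1 : k) : MvPolynomial (Fin n) k)) • m ∈ g (b + c) := by
  intro N
  induction N using Nat.strong_induction_on with
  | _ N ih =>
    intro c b hN m hm
    rcases eq_or_ne c 0 with h | h
    · subst h
      simpa using hm
    · obtain ⟨i, hi⟩ := Finset.nonempty_iff_ne_empty.mpr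
        (fun he => h (Finsupp.support_eq_empty.mp he))
      have hci : c i ≠ 0 := Finsupp.mem_support_iff.mp hi
      have hcc := sub_single_add hci
      set c' := c - Finsupp.single i 1 with hc'
      have hmon : (monomial c (1 : k) : MvPolynomial (Fin n) k)
          = monomial c' 1 * X i := by
        rw [X, monomial_mul, mul_one, add_comm, hcc]
      have hdeg : deg c' < N := by
        have : deg c = 1 + deg c' := by rw [← hcc, deg_add, deg_single]
        omega
      have h1 : (X i : MvPolynomial (Fin n) k) • m ∈ g (b + Finsupp.single i 1) :=
        hmul b i m hm
      have h2 := ih (deg c') hdeg c' (b + Finsupp.single i 1) rfl _ h1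
      rw [hmon, mul_smul]
      have heq : b + Finsupp.single i 1 + c' = b + c := by
        rw [add_assoc, hcc]
      rwa [heq] at h2

lemma monomial_smul_eq_zero
    (hmul : ∀ (b : Fin n →₀ ℕ) (i : Fin n), ∀ m ∈ g b,
      (X i : MvPolynomial (Fin n) k) • m ∈ g (b + Finsupp.single i 1))
    (hsf : ∀ b : Fin n →₀ ℕ, ∀ i ∈ b.support,
      (∀ m ∈ g b, (X i : MvPolynomial (Fin n) k) • m = 0 → m = 0) ∧
      (∀ m' ∈ g (b + Finsupp.single i 1), ∃ m ∈ g b,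
        (X i : MvPolynomial (Fin n) k) • m = m'))
    (R : Finset (Fin n)) :
    ∀ (N : ℕ) (c d : Fin n →₀ ℕ), deg c = N → c.support ⊆ R → d.support ⊆ R →
      ∀ m ∈ g (chi n R + d),
      ((monomial c (1 : k) : MvPolynomial (Fin n) k)) • m = 0 → m = 0 := by
  intro N
  induction N using Nat.strong_induction_on with
  | _ N ih =>
    intro c d hN hcR hdR m hm hz
    rcases eq_or_ne c 0 with h | h
    · subst h
      simpa using hz
    · obtain ⟨i, hi⟩ := Finset.nonempty_iff_ne_empty.mpr
        (fun he => h (Finsupp.support_eq_empty.mp he))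
      have hci : c i ≠ 0 := Finsupp.mem_support_iff.mp hi
      have hiR : i ∈ R := hcR hi
      have hcc := sub_single_add hci
      set c' := c - Finsupp.single i 1 with hc'
      have hmon : (monomial c (1 : k) : MvPolynomial (Fin n) k)
          = monomial c' 1 * X i := by
        rw [X, monomial_mul, mul_one, add_comm, hcc]
      have hdeg : deg c' < N := by
        have : deg c = 1 + deg c' := by rw [← hcc, deg_add, deg_single]
        omega
      have hXm : (X i : MvPolynomial (Fin n) k) • m ∈
          g (chi n R + (d + Finsupp.single i 1)) := by
        have h1 := hmul (chi n R + d) i m hm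
        rwa [add_assoc] at h1
      have hd'R : (d + Finsupp.single i 1).support ⊆ R := by
        intro j hj
        rcases Finset.mem_union.mp (Finsupp.support_add hj) with h' | h'
        · exact hdR h'
        · have := Finsupp.support_single_subset h'
          rw [Finset.mem_singleton] at this
          subst this
          exact hiR
      have hXz : (X i : MvPolynomial (Fin n) k) • m = 0 := by
        apply ih (deg c') hdeg c' (d + Finsupp.single i 1) rfl
          (fun j hj => hcR (Finsupp.support_tsub hj)) hd'R _ hXm
        rw [hmon, mul_smul] at hz
        exact hz
      have hisup : i ∈ (chi n R + d).support := by
        rw [Finsupp.mem_support_iff, Finsupp.add_apply, chi_apply, if_pos hiR]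
        omega
      exact (hsf (chi n R + d) i hisup).1 m hm hXz

lemma gbot_of_chi_bot
    (hsf : ∀ b : Fin n →₀ ℕ, ∀ i ∈ b.support,
      (∀ m ∈ g b, (X i : MvPolynomial (Fin n) k) • m = 0 → m = 0) ∧
      (∀ m' ∈ g (b + Finsupp.single i 1), ∃ m ∈ g b,
        (X i : MvPolynomial (Fin n) k) • m = m')) :
    ∀ (N : ℕ) (b : Fin n →₀ ℕ), deg b = N →
      g (chi n b.support) = ⊥ → g b = ⊥ := by
  intro N
  induction N using Nat.strong_induction_on with
  | _ N ih =>
    intro b hN hbot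
    by_cases hone : ∀ i, b i ≤ 1
    · have : b = chi n b.support := by
        ext j
        rw [chi_apply]
        by_cases hj : j ∈ b.support
        · rw [if_pos hj]
          have := Finsupp.mem_support_iff.mp hj
          have := hone j
          omega
        · rw [if_neg hj]
          exact Finsupp.notMem_support_iff.mp hj
      rw [this]
      exact hbot
    · push_neg at hone
      obtain ⟨i, hi2⟩ := hone
      have hci : b i ≠ 0 := by omega
      have hcc := sub_single_add hci
      set b' := b - Finsupp.single i 1 with hb'
      have hsupp : b'.support = b.support := by
        ext j
        rw [Finsupp.mem_support_iff, Finsupp.mem_support_iff, hb', Finsupp.tsub_apply]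
        by_cases h : i = j
        · subst h
          rw [Finsupp.single_eq_same]
          omega
        · rw [Finsupp.single_eq_of_ne' h]
          omega
      have hdeg : deg b' < N := by
        have : deg b = 1 + deg b' := by rw [← hcc, deg_add, deg_single]
        omega
      have hb'bot : g b' = ⊥ := by
        apply ih (deg b') hdeg b' rfl
        rw [hsupp]
        exact hbot
      have hib' : i ∈ b'.support := by
        rw [Finsupp.mem_support_iff, hb', Finsupp.tsub_apply, Finsupp.single_eq_same]
        omega
      rw [Submodule.eq_bot_iff]
      intro m' hm'
      have hm'2 : m' ∈ g (b' + Finsupp.single i 1) := by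
        rwa [add_comm, hcc]
      obtain ⟨m, hm, hx⟩ := (hsf b' i hib').2 m' hm'2
      rw [hb'bot, Submodule.mem_bot] at hm
      rw [← hx, hm, smul_zero]

lemma mem_ann_iff (hdecomp : DirectSum.IsInternal g)
    {f : MvPolynomial (Fin n) k} :
    f ∈ ((⊤ : Submodule (MvPolynomial (Fin n) k) M)).annihilator ↔
      ∀ b : Fin n →₀ ℕ, ∀ m ∈ g b, f • m = 0 := by
  rw [Submodule.mem_annihilator]
  constructor
  · intro h b m _
    exact h m Submodule.mem_top
  · intro h m _
    have hmm0 : m ∈ (⨆ b, g b : Submodule k M) := by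
      rw [hdecomp.submodule_iSup_eq_top]
      exact Submodule.mem_top
    refine Submodule.iSup_induction g (motive := fun m => f • m = 0) hmm0 ?_ ?_ ?_
    · exact fun b m hm => h b m hm
    · exact smul_zero f
    · intro x y hx hy
      rw [smul_add, hx, hy, add_zero]

lemma sum_comp_eq_zero (hdecomp : DirectSum.IsInternal g)
    {s : Finset (Fin n →₀ ℕ)} {v : (Fin n →₀ ℕ) → M} {b : Fin n →₀ ℕ}
    (hv : ∀ c ∈ s, v c ∈ g (b + c)) (hsum : ∑ c ∈ s, v c = 0) :
    ∀ c ∈ s, v c = 0 := by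
  classical
  intro c hc
  have hind := hdecomp.submodule_iSupIndep
  have h1 : v c = -∑ c' ∈ s.erase c, v c' := by
    rw [eq_neg_iff_add_eq_zero, ← Finset.add_sum_erase s v hc] at *
    exact hsum
  have h2 : v c ∈ (⨆ (j) (_ : j ≠ b + c), g j : Submodule k M) := by
    rw [h1]
    apply neg_mem
    apply Submodule.sum_mem
    intro c' hc'
    have hne : b + c' ≠ b + c := by
      intro h
      exact (Finset.mem_erase.mp hc').1 (add_left_cancel h)
    exact Submodule.mem_iSup_of_mem (b + c')
      (Submodule.mem_iSup_of_mem hne (hv c' (Finset.erase_subset _ _ hc')))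
  exact (Submodule.disjoint_def.mp (hind (b + c))) _ (hv c hc) h2

lemma smul_decomp (f : MvPolynomial (Fin n) k) (m : M) :
    f • m = ∑ c ∈ f.support, coeff c f • ((monomial c (1 : k) : MvPolynomial (Fin n) k) • m) := by
  conv_lhs => rw [as_sum f]
  rw [Finset.sum_smul]
  apply Finset.sum_congr rfl
  intro c _
  have h1 : (monomial c (coeff c f) : MvPolynomial (Fin n) k)
      = C (coeff c f) * monomial c 1 := by
    rw [C_mul_monomial, mul_one]
  rw [h1, mul_smul, ← MvPolynomial.algebraMap_eq, algebraMap_smul]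

lemma ann_le_PR (hdecomp : DirectSum.IsInternal g)
    (hmul : ∀ (b : Fin n →₀ ℕ) (i : Fin n), ∀ m ∈ g b,
      (X i : MvPolynomial (Fin n) k) • m ∈ g (b + Finsupp.single i 1))
    (hsf : ∀ b : Fin n →₀ ℕ, ∀ i ∈ b.support,
      (∀ m ∈ g b, (X i : MvPolynomial (Fin n) k) • m = 0 → m = 0) ∧
      (∀ m' ∈ g (b + Finsupp.single i 1), ∃ m ∈ g b,
        (X i : MvPolynomial (Fin n) k) • m = m'))
    {R : Finset (Fin n)} (hR : g (chi n R) ≠ ⊥) :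
    ((⊤ : Submodule (MvPolynomial (Fin n) k) M)).annihilator ≤ PR R := by
  intro f hf
  rw [mem_PR]
  intro c hcR
  by_contra hc0
  have hcf : c ∈ f.support := MvPolynomial.mem_support_iff.mpr hc0
  obtain ⟨m, hm, hm0⟩ := (Submodule.ne_bot_iff _).mp hR
  have hfm : f • m = 0 := (mem_ann_iff hdecomp).mp hf (chi n R) m hm
  rw [smul_decomp] at hfm
  have hterm := sum_comp_eq_zero hdecomp
    (v := fun c => coeff c f • ((monomial c (1 : k) : MvPolynomial (Fin n) k) • m))
    (b := chi n R)
    (fun c _ => Submodule.smul_mem _ _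
      (monomial_smul_mem hmul (deg c) c (chi n R) rfl m hm)) hfm c hcf
  have hmz : (monomial c (1 : k) : MvPolynomial (Fin n) k) • m = 0 := by
    have h3 := congrArg (fun z => (coeff c f)⁻¹ • z) hterm
    simpa [smul_smul, inv_mul_cancel₀ hc0] using h3
  have := monomial_smul_eq_zero hmul hsf R (deg c) c 0 rfl hcR (by simp) m
    (by rwa [add_zero]) hmz
  exact hm0 this

lemma prod_X_eq (R : Finset (Fin n)) :
    (∏ j ∈ R, (X j : MvPolynomial (Fin n) k)) = monomial (chi n R) 1 := by
  rw [← prod_X_pow_eq_monomial, chi_support]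
  apply Finset.prod_congr rfl
  intro j hj
  rw [chi_apply, if_pos hj, pow_one]

lemma max_ann (hdecomp : DirectSum.IsInternal g)
    (hmul : ∀ (b : Fin n →₀ ℕ) (i : Fin n), ∀ m ∈ g b,
      (X i : MvPolynomial (Fin n) k) • m ∈ g (b + Finsupp.single i 1))
    (hsf : ∀ b : Fin n →₀ ℕ, ∀ i ∈ b.support,
      (∀ m ∈ g b, (X i : MvPolynomial (Fin n) k) • m = 0 → m = 0) ∧
      (∀ m' ∈ g (b + Finsupp.single i 1), ∃ m ∈ g b,
        (X i : MvPolynomial (Fin n) k) • m = m'))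
    {R : Finset (Fin n)}
    (hmax : ∀ R' : Finset (Fin n), g (chi n R') ≠ ⊥ → R ⊆ R' → R' = R)
    {i : Fin n} (hi : i ∉ R) :
    (X i * ∏ j ∈ R, (X j : MvPolynomial (Fin n) k)) ∈
      ((⊤ : Submodule (MvPolynomial (Fin n) k) M)).annihilator := by
  rw [mem_ann_iff hdecomp]
  intro b m hm
  have hf : (X i * ∏ j ∈ R, (X j : MvPolynomial (Fin n) k))
      = monomial (Finsupp.single i 1 + chi n R) 1 := by
    rw [prod_X_eq, X, monomial_mul, one_mul]
  set b2 := b + (Finsupp.single i 1 + chi n R) with hb2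
  have hmem : (monomial (Finsupp.single i 1 + chi n R) (1 : k) :
      MvPolynomial (Fin n) k) • m ∈ g b2 :=
    monomial_smul_mem hmul _ _ b rfl m hm
  have hbot : g b2 = ⊥ := by
    by_contra hne
    have hchine : g (chi n b2.support) ≠ ⊥ := by
      intro hcb
      exact hne (gbot_of_chi_bot hsf (deg b2) b2 rfl hcb)
    have hRsub : R ⊆ b2.support := by
      intro j hj
      rw [Finsupp.mem_support_iff, hb2, Finsupp.add_apply, Finsupp.add_apply,
        chi_apply, if_pos hj]
      omega
    have := hmax b2.support hchine hRsub
    apply hi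
    rw [← this]
    rw [Finsupp.mem_support_iff, hb2, Finsupp.add_apply, Finsupp.add_apply,
      Finsupp.single_eq_same]
    omega
  rw [hf]
  rw [hbot, Submodule.mem_bot] at hmem
  exact hmem

lemma exists_max_ext {R0 : Finset (Fin n)} (h : g (chi n R0) ≠ ⊥) :
    ∃ R : Finset (Fin n),
      (g (chi n R) ≠ ⊥ ∧ ∀ R' : Finset (Fin n), g (chi n R') ≠ ⊥ → R ⊆ R' → R' = R) ∧
      R0 ⊆ R := by
  classical
  obtain ⟨R, hRs, hcard⟩ := Finset.exists_max_image
    ((Finset.univ : Finset (Finset (Fin n))).filter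
      (fun R => g (chi n R) ≠ ⊥ ∧ R0 ⊆ R)) Finset.card
    ⟨R0, by simp [h]⟩
  rw [Finset.mem_filter] at hRs
  refine ⟨R, ⟨hRs.2.1, ?_⟩, hRs.2.2⟩
  intro R' hR' hsub
  have hR's : R' ∈ (Finset.univ : Finset (Finset (Fin n))).filter
      (fun R => g (chi n R) ≠ ⊥ ∧ R0 ⊆ R) := by
    rw [Finset.mem_filter]
    exact ⟨Finset.mem_univ _, hR', hRs.2.2.trans hsub⟩
  exact (Finset.eq_of_subset_of_card_le hsub (hcard R' hR's)).symm

lemma inf_le_ann (hdecomp : DirectSum.IsInternal g)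
    (hmul : ∀ (b : Fin n →₀ ℕ) (i : Fin n), ∀ m ∈ g b,
      (X i : MvPolynomial (Fin n) k) • m ∈ g (b + Finsupp.single i 1))
    (hsf : ∀ b : Fin n →₀ ℕ, ∀ i ∈ b.support,
      (∀ m ∈ g b, (X i : MvPolynomial (Fin n) k) • m = 0 → m = 0) ∧
      (∀ m' ∈ g (b + Finsupp.single i 1), ∃ m ∈ g b,
        (X i : MvPolynomial (Fin n) k) • m = m'))
    {f : MvPolynomial (Fin n) k}
    (hf : ∀ R : Finset (Fin n),
      (g (chi n R) ≠ ⊥ ∧ ∀ R' : Finset (Fin n), g (chi n R') ≠ ⊥ → R ⊆ R' → R' = R) →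
      f ∈ PR R) :
    f ∈ ((⊤ : Submodule (MvPolynomial (Fin n) k) M)).annihilator := by
  classical
  rw [mem_ann_iff hdecomp]
  intro b m hm
  rw [smul_decomp]
  apply Finset.sum_eq_zero
  intro c _
  by_cases hz : (monomial c (1 : k) : MvPolynomial (Fin n) k) • m = 0
  · rw [hz, smul_zero]
  · have hne : g (b + c) ≠ ⊥ := by
      intro hb
      apply hz
      have := monomial_smul_mem hmul (deg c) c b rfl m hm
      rwa [hb, Submodule.mem_bot] at this
    have hchine : g (chi n (b + c).support) ≠ ⊥ := by
      intro hcb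
      exact hne (gbot_of_chi_bot hsf (deg (b + c)) (b + c) rfl hcb)
    -- extend to a maximal R
    obtain ⟨R, hRmax, hsub⟩ := exists_max_ext (g := g) hchine
    have hcoeff : coeff c f = 0 := by
      apply mem_PR.mp (hf R hRmax)
      intro j hj
      apply hsub
      rw [Finsupp.mem_support_iff] at hj ⊢
      rw [Finsupp.add_apply]
      omega
    rw [hcoeff, zero_smul]


end SqFree

/-- Let `M` be a square free `ℕ^n`-graded module over `S = k[x_1,…,x_n]` (the grading given
by `k`-submodules `g b` forming an internal direct sum, compatible with multiplication by
the variables, and with `x_i : M_b → M_{b+u_i}` bijective whenever `i` is in the support of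
`b`).  Then the minimal primes of `M` (the minimal primes over its annihilator) are exactly
the ideals `(x_i : i ∉ R)` where `R` ranges over the maximal subsets of `[n]` with
`M_R ≠ 0`. -/
theorem stmt_12 (n : ℕ) (k : Type) [Field k]
    (M : Type) [AddCommGroup M] [Module (MvPolynomial (Fin n) k) M]
    [Module k M] [IsScalarTower k (MvPolynomial (Fin n) k) M]
    (g : (Fin n →₀ ℕ) → Submodule k M)
    (hdecomp : DirectSum.IsInternal g)
    (hmul : ∀ (b : Fin n →₀ ℕ) (i : Fin n), ∀ m ∈ g b,
      (X i : MvPolynomial (Fin n) k) • m ∈ g (b + Finsupp.single i 1))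
    (hsf : ∀ b : Fin n →₀ ℕ, ∀ i ∈ b.support,
      (∀ m ∈ g b, (X i : MvPolynomial (Fin n) k) • m = 0 → m = 0) ∧
      (∀ m' ∈ g (b + Finsupp.single i 1), ∃ m ∈ g b,
        (X i : MvPolynomial (Fin n) k) • m = m')) :
    ((⊤ : Submodule (MvPolynomial (Fin n) k) M).annihilator).minimalPrimes =
      {P : Ideal (MvPolynomial (Fin n) k) | ∃ R : Finset (Fin n),
        (g (chi n R) ≠ ⊥ ∧ ∀ R' : Finset (Fin n), g (chi n R') ≠ ⊥ → R ⊆ R' → R' = R) ∧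
        P = Ideal.span ((fun i => (X i : MvPolynomial (Fin n) k)) '' {i | i ∉ R})} := by
  classical
  ext Q
  simp only [Set.mem_setOf_eq]
  constructor
  · intro hQ
    obtain ⟨⟨hQp, hQa⟩, hQmin⟩ := hQ
    have hinf : ((Finset.univ : Finset (Finset (Fin n))).filter
        (fun R => g (chi n R) ≠ ⊥ ∧
          ∀ R' : Finset (Fin n), g (chi n R') ≠ ⊥ → R ⊆ R' → R' = R)).inf
        (fun R => SqFree.PR (k := k) R) ≤ Q := by
      refine le_trans ?_ hQa
      intro f hf
      apply SqFree.inf_le_ann hdecomp hmul hsf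
      intro R hR
      exact Submodule.mem_finsetInf.mp hf R
        (Finset.mem_filter.mpr ⟨Finset.mem_univ _, hR⟩)
    obtain ⟨R, hRs, hPRQ⟩ := (Ideal.IsPrime.inf_le' hQp).mp hinf
    rw [Finset.mem_filter] at hRs
    have hQP : Q ≤ SqFree.PR R :=
      hQmin ⟨SqFree.PR_isPrime R, SqFree.ann_le_PR hdecomp hmul hsf hRs.2.1⟩ hPRQ
    exact ⟨R, hRs.2, le_antisymm hQP hPRQ⟩
  · rintro ⟨R, ⟨hRne, hRmax⟩, rfl⟩
    refine ⟨⟨SqFree.PR_isPrime R, SqFree.ann_le_PR hdecomp hmul hsf hRne⟩, ?_⟩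
    intro J hJ hle
    rw [Ideal.span_le]
    rintro _ ⟨i, hi, rfl⟩
    have hf := SqFree.max_ann hdecomp hmul hsf hRmax hi
    have hfJ := hJ.2 hf
    rcases hJ.1.mem_or_mem hfJ with h | h
    · exact h
    · exfalso
      have hmem : (∏ j ∈ R, (X j : MvPolynomial (Fin n) k)) ∈ SqFree.PR R := hle h
      have h1 := SqFree.mem_PR.mp hmem (chi n R) (by rw [SqFree.chi_support])
      rw [SqFree.prod_X_eq, coeff_monomial, if_pos rfl] at h1
      exact one_ne_zero h1
end
end
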